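/- Let (X,C,R,κ) be a mass action system whose graph of complexes is the chain with vertex set C = {1,…,c} and arc set R = {(i, i−1) : 2 ≤ i ≤ c} ∪ {(i, i+1) : 2 ≤ i ≤ c−1}, and whose deficiency satisfies δ = 1. Let h ∈ ℝ^c be a fixed vector with 0 ≠ h ∈ ker B ∩ ran I_κ and ∑_{i=2}^c h_i ≤ 0, and let ϑ ∈ ℝ^c satisfy I_κ·ϑ = h. Then ϑ_2 = −(1/κ_{21})·∑_{i=2}^c h_i, and for every j ∈ {3,…,c}, ϑ_j = (κ_{j−1,j}/κ_{j,j−1})·ϑ_{j−1} − (1/κ_{j,j−1})·∑_{i=j}^c h_i. -/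

import Mathlib

open Finset

/-- The matrix `I_κ ∈ ℝ^{c×c}` with `(I_κ)_{ji} = κ_{ij}` for `j ≠ i` and
`(I_κ)_{ii} = −∑_{k≠i} κ_{ik}`. -/
noncomputable def Ikappa {c : ℕ} (κ : Fin c → Fin c → ℝ) : Matrix (Fin c) (Fin c) ℝ :=
  Matrix.of fun j i => if j = i then -∑ k ∈ Finset.univ.erase i, κ i k else κ i j

/-- `κ` is (the extension by zero of) a family of positive rate coefficients on `R`. -/
def ValidK {c : ℕ} (R : Finset (Fin c × Fin c)) (κ : Fin c → Fin c → ℝ) : Prop :=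
  (∀ p ∈ R, 0 < κ p.1 p.2) ∧ ∀ p : Fin c × Fin c, p ∉ R → κ p.1 p.2 = 0

/-- The monomial map `Θ : ℝ^n_{>0} → ℝ^c`, `Θ(x)_i = ∏_s x_s^{B_{si}}`. -/
noncomputable def Theta {n c : ℕ} (B : Matrix (Fin n) (Fin c) ℕ) (x : Fin n → ℝ) :
    Fin c → ℝ :=
  fun i => ∏ s, x s ^ B s i

/-- The set of positive steady states `E^κ_+` is nonempty. -/
def EposNonempty {n c : ℕ} (B : Matrix (Fin n) (Fin c) ℕ) (κ : Fin c → Fin c → ℝ) : Prop :=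
  ∃ x : Fin n → ℝ, (∀ s, 0 < x s) ∧
    (B.map (Nat.cast : ℕ → ℝ)).mulVec ((Ikappa κ).mulVec (Theta B x)) = 0

/-- The deficiency `δ = dim(ker B ∩ ran I_κ)` equals one. -/
def DeficiencyOneAt {n c : ℕ} (B : Matrix (Fin n) (Fin c) ℕ)
    (κ : Fin c → Fin c → ℝ) : Prop :=
  Module.finrank ℝ
    ↥(LinearMap.ker (Matrix.mulVecLin (B.map (Nat.cast : ℕ → ℝ))) ⊓
      LinearMap.range (Matrix.mulVecLin (Ikappa κ))) = 1

/-- The graph of complexes of the "chain" network: complexes `C_1, …, C_c` are represented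
by `0, …, c-1 : Fin c`; the arcs are `(i, i−1)` for `2 ≤ i ≤ c` and `(i, i+1)` for
`2 ≤ i ≤ c−1` (in the 1-based labelling of the paper). -/
def chainR (c : ℕ) : Finset (Fin c × Fin c) :=
  Finset.univ.filter
    (fun p => 1 ≤ p.1.val ∧ (p.1.val = p.2.val + 1 ∨ p.2.val = p.1.val + 1))

/-- The predecessor of a complex along the chain (`C_j ↦ C_{j−1}`). -/
def fpred {c : ℕ} (j : Fin c) : Fin c :=
  ⟨j.val - 1, Nat.lt_of_le_of_lt (Nat.sub_le _ _) j.isLt⟩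

lemma colsum {c : ℕ} (κ : Fin c → Fin c → ℝ)
    (hz : ∀ p q : Fin c, ¬(1 ≤ p.val ∧ (p.val = q.val + 1 ∨ q.val = p.val + 1)) → κ p q = 0)
    (j : Fin c) (hj : 1 ≤ j.val) (i : Fin c) :
    ∑ r ∈ Finset.univ.filter (fun r : Fin c => j.val ≤ r.val), Ikappa κ r i
      = if i = fpred j then κ (fpred j) j else if i = j then -(κ j (fpred j)) else 0 := by
  by_cases hij : j.val ≤ i.val
  · -- i ∈ F
    have hine : i ≠ fpred j := by
      intro e; have := congrArg Fin.val e; simp [fpred] at this; omega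
    rw [if_neg hine]
    have hiF : i ∈ Finset.univ.filter (fun r : Fin c => j.val ≤ r.val) :=
      Finset.mem_filter.mpr ⟨Finset.mem_univ _, hij⟩
    rw [← Finset.add_sum_erase _ _ hiF]
    have hdiag : Ikappa κ i i = -∑ k ∈ Finset.univ.erase i, κ i k := by
      simp [Ikappa]
    have hoff : ∀ r ∈ (Finset.univ.filter (fun r : Fin c => j.val ≤ r.val)).erase i,
        Ikappa κ r i = κ i r := by
      intro r hr
      have : r ≠ i := (Finset.mem_erase.mp hr).1
      simp [Ikappa, this]
    rw [Finset.sum_congr rfl hoff, hdiag]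
    have hsub : (Finset.univ.filter (fun r : Fin c => j.val ≤ r.val)).erase i ⊆
        Finset.univ.erase i := by
      intro k hk; simp at hk ⊢; exact hk.1
    rw [← Finset.sum_sdiff hsub]
    have hset : Finset.univ.erase i \ (Finset.univ.filter (fun r : Fin c => j.val ≤ r.val)).erase i
        = Finset.univ.filter (fun k : Fin c => k.val < j.val) := by
      ext k
      simp [Finset.mem_sdiff, Finset.mem_erase, Fin.ext_iff]
      omega
    rw [hset]
    by_cases hij2 : i = j
    · subst hij2
      rw [if_pos rfl]
      have : ∑ k ∈ Finset.univ.filter (fun k : Fin c => k.val < i.val), κ i k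
          = κ i (fpred i) := by
        apply Finset.sum_eq_single (fpred i)
        · intro b hb hbne
          simp at hb
          apply hz
          have : b.val ≠ i.val - 1 := fun e => hbne (Fin.ext (by simp [fpred, e]))
          omega
        · intro hni
          exfalso
          apply hni
          simp only [Finset.mem_filter, Finset.mem_univ, true_and]
          show i.val - 1 < i.val
          omega
      rw [this]; ring
    · rw [if_neg hij2]
      have : ∑ k ∈ Finset.univ.filter (fun k : Fin c => k.val < j.val), κ i k = 0 := by
        apply Finset.sum_eq_zero
        intro b hb
        simp at hb
        apply hz
        have : i.val ≠ j.val := fun e => hij2 (Fin.ext e)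
        omega
      rw [this]; ring
  · -- i ∉ F
    push_neg at hij
    have hine : i ≠ j := by
      intro e; have := congrArg Fin.val e; omega
    have h1 : ∀ r ∈ Finset.univ.filter (fun r : Fin c => j.val ≤ r.val),
        Ikappa κ r i = κ i r := by
      intro r hr
      simp at hr
      have hri : r ≠ i := by
        intro e; have := congrArg Fin.val e; omega
      simp [Ikappa, hri]
    rw [Finset.sum_congr rfl h1, if_neg hine]
    by_cases hif : i = fpred j
    · subst hif
      rw [if_pos rfl]
      apply Finset.sum_eq_single j
      · intro b hb hbne
        simp at hb
        apply hz
        have hb2 : b.val ≠ j.val := fun e => hbne (Fin.ext e)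
        simp only [fpred]
        omega
      · intro hnj
        exfalso
        apply hnj
        simp only [Finset.mem_filter, Finset.mem_univ, true_and]
        exact le_refl _
    · rw [if_neg hif]
      apply Finset.sum_eq_zero
      intro b hb
      simp at hb
      apply hz
      have : i.val ≠ j.val - 1 := fun e => hif (Fin.ext (by simp [fpred, e]))
      omega

lemma keysum {c : ℕ} (κ : Fin c → Fin c → ℝ)
    (hz : ∀ p q : Fin c, ¬(1 ≤ p.val ∧ (p.val = q.val + 1 ∨ q.val = p.val + 1)) → κ p q = 0)
    (h ϑ : Fin c → ℝ) (hϑ : (Ikappa κ).mulVec ϑ = h)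
    (j : Fin c) (hj : 1 ≤ j.val) :
    ∑ i ∈ Finset.univ.filter (fun i : Fin c => j.val ≤ i.val), h i
      = κ (fpred j) j * ϑ (fpred j) - κ j (fpred j) * ϑ j := by
  have hne : fpred j ≠ j := by
    intro e; have := congrArg Fin.val e; simp [fpred] at this; omega
  have step1 : ∑ i ∈ Finset.univ.filter (fun i : Fin c => j.val ≤ i.val), h i
      = ∑ r ∈ Finset.univ.filter (fun r : Fin c => j.val ≤ r.val), ∑ i, Ikappa κ r i * ϑ i := by
    rw [← hϑ]
    apply Finset.sum_congr rfl
    intro r _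
    rfl
  rw [step1, Finset.sum_comm]
  have step2 : ∀ i : Fin c,
      ∑ r ∈ Finset.univ.filter (fun r : Fin c => j.val ≤ r.val), Ikappa κ r i * ϑ i
      = (if i = fpred j then κ (fpred j) j * ϑ (fpred j) else 0)
        + (if i = j then -(κ j (fpred j) * ϑ j) else 0) := by
    intro i
    rw [← Finset.sum_mul, colsum κ hz j hj i]
    by_cases h1 : i = fpred j
    · subst h1
      simp [hne]
    · by_cases h2 : i = j
      · subst h2; simp [h1]
      · simp [h1, h2]
  rw [Finset.sum_congr rfl (fun i _ => step2 i), Finset.sum_add_distrib]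
  simp [Finset.sum_ite_eq']
  ring

theorem stmt1 {n c : ℕ} (hc : 2 ≤ c)
    (B : Matrix (Fin n) (Fin c) ℕ)
    (κ : Fin c → Fin c → ℝ) (hκ : ValidK (chainR c) κ)
    (hdef : DeficiencyOneAt B κ)
    (h : Fin c → ℝ) (hh0 : h ≠ 0)
    (hker : (B.map (Nat.cast : ℕ → ℝ)).mulVec h = 0)
    (hran : ∃ v : Fin c → ℝ, (Ikappa κ).mulVec v = h)
    (hCpp : ∑ i ∈ Finset.univ.filter (fun i : Fin c => 1 ≤ i.val), h i ≤ 0)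
    (ϑ : Fin c → ℝ) (hϑ : (Ikappa κ).mulVec ϑ = h) :
    ϑ ⟨1, lt_of_lt_of_le one_lt_two hc⟩ =
      -(1 / κ ⟨1, lt_of_lt_of_le one_lt_two hc⟩ ⟨0, lt_of_lt_of_le two_pos hc⟩) *
        ∑ i ∈ Finset.univ.filter (fun i : Fin c => 1 ≤ i.val), h i ∧
    ∀ j : Fin c, 2 ≤ j.val →
      ϑ j = (κ (fpred j) j / κ j (fpred j)) * ϑ (fpred j) -
        (1 / κ j (fpred j)) *
          ∑ i ∈ Finset.univ.filter (fun i : Fin c => j.val ≤ i.val), h i := by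
  have hz : ∀ p q : Fin c, ¬(1 ≤ p.val ∧ (p.val = q.val + 1 ∨ q.val = p.val + 1)) → κ p q = 0 := by
    intro p q hpq
    exact hκ.2 (p, q) (by simpa [chainR] using hpq)
  have hpos : ∀ j : Fin c, 1 ≤ j.val → 0 < κ j (fpred j) := by
    intro j hj
    apply hκ.1 (j, fpred j)
    simp only [chainR, Finset.mem_filter, Finset.mem_univ, true_and]
    refine ⟨hj, Or.inl ?_⟩
    show j.val = j.val - 1 + 1
    omega
  constructor
  · set j1 : Fin c := ⟨1, lt_of_lt_of_le one_lt_two hc⟩ with hj1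
    have hS := keysum κ hz h ϑ hϑ j1 le_rfl
    have hf : fpred j1 = ⟨0, lt_of_lt_of_le two_pos hc⟩ := by
      apply Fin.ext; rfl
    rw [hf] at hS
    have hz0 : κ ⟨0, lt_of_lt_of_le two_pos hc⟩ j1 = 0 := by
      apply hz; simp
    rw [hz0] at hS
    have hb : 0 < κ j1 ⟨0, lt_of_lt_of_le two_pos hc⟩ := by
      have := hpos j1 le_rfl
      rwa [hf] at this
    have hbne : κ j1 ⟨0, lt_of_lt_of_le two_pos hc⟩ ≠ 0 := ne_of_gt hb
    have hSS : ∑ i ∈ Finset.univ.filter (fun i : Fin c => 1 ≤ i.val), h i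
        = ∑ i ∈ Finset.univ.filter (fun i : Fin c => j1.val ≤ i.val), h i := rfl
    rw [hSS, hS]
    field_simp
    ring
  · intro j hj
    have hS := keysum κ hz h ϑ hϑ j (by omega)
    have hb : 0 < κ j (fpred j) := hpos j (by omega)
    have hbne : κ j (fpred j) ≠ 0 := ne_of_gt hb
    rw [hS]
    field_simp
    ring
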